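/- Let (X,d,μ) be a proper metric measure space (closed bounded sets are compact) with μ a Borel measure that is positive on every nonempty open set and finite on balls. Let Ω ⊆ X be a nonempty bounded open set with nonempty boundary ∂Ω, and let u : Ω̄ → ℝ be continuous on Ω̄ with u ∈ L¹_loc(Ω,μ), such that the AMV Laplacian Δ_μ u(x) exists and equals 0 for every x ∈ Ω. Assume there exists a bounded function φ, upper semicontinuous on Ω̄, such that Δ̲_μ φ(x) > 0 for every x ∈ Ω. Then max_{∂Ω} u = max_{Ω̄} u and min_{∂Ω} u = min_{Ω̄} u. -/

import Mathlib

open MeasureTheory Metric Filter Topology Real Set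
open scoped ENNReal

/-- An upper semicontinuous function on a nonempty compact set attains its maximum. -/
lemma usc_exists_max {X : Type*} [TopologicalSpace X] {K : Set X} (hK : IsCompact K)
    (hne : K.Nonempty) {f : X → ℝ} (hf : UpperSemicontinuousOn f K) :
    ∃ x ∈ K, ∀ y ∈ K, f y ≤ f x := by
  by_contra h
  push_neg at h
  choose y hyK hylt using h
  have hU : ∀ x (hx : x ∈ K), ∃ U : Set X, IsOpen U ∧ x ∈ U ∧
      U ∩ K ⊆ {z | f z < f (y x hx)} := by
    intro x hx
    have h2 := hf x hx (f (y x hx)) (hylt x hx)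
    exact mem_nhdsWithin.1 h2
  choose U hUo hxU hUsub using hU
  obtain ⟨t, ht⟩ := hK.elim_nhds_subcover' U (fun x hx => (hUo x hx).mem_nhds (hxU x hx))
  obtain ⟨x₁, hx₁⟩ := hne
  have htne : t.Nonempty := by
    rcases Set.mem_iUnion₂.1 (ht hx₁) with ⟨a, ha, -⟩
    exact ⟨a, ha⟩
  obtain ⟨b, hbt, hbmax⟩ := t.exists_max_image (fun z => f (y z z.2)) htne
  have hw : y b b.2 ∈ K := hyK b b.2
  rcases Set.mem_iUnion₂.1 (ht hw) with ⟨a, hat, haw⟩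
  have h1 : f (y b b.2) < f (y a a.2) := hUsub a a.2 ⟨haw, hw⟩
  exact absurd (hbmax a hat) (not_le.2 h1)

lemma amv_max_principle
    {X : Type*} [MetricSpace X] [ProperSpace X] [MeasurableSpace X] [BorelSpace X]
    (μ : Measure X)
    (hfin : ∀ (x : X) (r : ℝ), μ (Metric.ball x r) < ⊤)
    (Ω : Set X) (hΩo : IsOpen Ω) (hΩne : Ω.Nonempty) (hΩb : Bornology.IsBounded Ω)
    (hfr : (frontier Ω).Nonempty)
    (u : X → ℝ)
    (hcont : ContinuousOn u (closure Ω))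
    (hharm : ∀ x ∈ Ω, Filter.Tendsto
      (fun r : ℝ => (1 / r ^ 2) * ⨍ y in Metric.ball x r ∩ closure Ω, (u y - u x) ∂μ)
      (𝓝[>] (0 : ℝ)) (𝓝 0))
    (φ : X → ℝ)
    (hφb : Bornology.IsBounded (φ '' closure Ω))
    (hφusc : UpperSemicontinuousOn φ (closure Ω))
    (hφ : ∀ x ∈ Ω, 0 < Filter.liminf
      (fun r : ℝ => (1 / r ^ 2) * ⨍ y in Metric.ball x r ∩ closure Ω, (φ y - φ x) ∂μ)
      (𝓝[>] (0 : ℝ))) :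
    sSup (u '' frontier Ω) = sSup (u '' closure Ω) := by
  classical
  set K := closure Ω with hKdef
  have hKc : IsCompact K := hΩb.isCompact_closure
  have hKne : K.Nonempty := hΩne.mono subset_closure
  have hKm : MeasurableSet K := isClosed_closure.measurableSet
  have hΩK : Ω ⊆ K := subset_closure
  have hfrK : frontier Ω ⊆ K := frontier_subset_closure
  -- bound for u
  obtain ⟨Cu, hCu⟩ := isBounded_iff_forall_norm_le.1 (hKc.image_of_continuousOn hcont).isBounded
  have hCu' : ∀ y ∈ K, ‖u y‖ ≤ Cu := fun y hy => hCu _ (Set.mem_image_of_mem u hy)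
  -- bound for φ
  obtain ⟨Cφ, hCφ⟩ := isBounded_iff_forall_norm_le.1 hφb
  set C : ℝ := max Cφ 1 with hCdef
  have hCpos : (0 : ℝ) < C := lt_of_lt_of_le one_pos (le_max_right _ _)
  have hCφ' : ∀ y ∈ K, |φ y| ≤ C := fun y hy =>
    le_trans (hCφ _ (Set.mem_image_of_mem φ hy)) (le_max_left _ _)
  -- measurability of φ on K
  have hφrestr : Measurable (fun z : K => φ z) := by
    apply UpperSemicontinuous.measurable
    intro z c hc
    obtain ⟨U, hUo, hzU, hUsub⟩ := mem_nhdsWithin.1 (hφusc z z.2 c hc)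
    have hmem : (fun w : K => (w : X)) ⁻¹' U ∈ 𝓝 z :=
      (hUo.preimage continuous_subtype_val).mem_nhds hzU
    exact Filter.eventually_of_mem hmem fun w hw => hUsub ⟨hw, w.2⟩
  have hφ'meas : Measurable (fun x => if h : x ∈ K then φ x else (0 : ℝ)) :=
    Measurable.dite hφrestr measurable_const hKm
  have hφ_aesm : ∀ s : Set X, MeasurableSet s → s ⊆ K →
      AEStronglyMeasurable φ (μ.restrict s) := by
    intro s hsm hsub
    refine (hφ'meas.aestronglyMeasurable).congr ?_
    exact ae_restrict_of_forall_mem hsm fun y hy => by simp [hsub hy]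
  have hu_aesm : ∀ s : Set X, MeasurableSet s → s ⊆ K →
      AEStronglyMeasurable u (μ.restrict s) := by
    intro s hsm hsub
    exact ((hcont.aemeasurable hKm).mono_measure
      (Measure.restrict_mono hsub le_rfl)).aestronglyMeasurable
  -- main step: for every ε > 0 and y ∈ K, u y ≤ sSup (u '' frontier Ω) + ε * (2 * C)
  have hBbdd : BddAbove (u '' K) := (hKc.image_of_continuousOn hcont).bddAbove
  have hAbdd : BddAbove (u '' frontier Ω) := hBbdd.mono (Set.image_mono (f := u) hfrK)
  have hAne : (u '' frontier Ω).Nonempty := hfr.image u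
  have key : ∀ ε : ℝ, 0 < ε → ∀ y ∈ K, u y ≤ sSup (u '' frontier Ω) + ε * (2 * C) := by
    intro ε hε
    set v : X → ℝ := fun y => u y + ε * φ y with hvdef
    have hv_usc : UpperSemicontinuousOn v K := by
      refine (hcont.upperSemicontinuousOn).add ?_
      have := Continuous.comp_upperSemicontinuousOn (g := fun t : ℝ => ε * t)
        (continuous_const.mul continuous_id) hφusc
        (fun a b hab => mul_le_mul_of_nonneg_left hab hε.le)
      exact this
    obtain ⟨x₀, hx₀K, hmax⟩ := usc_exists_max hKc hKne hv_usc
    -- x₀ is not in Ω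
    have hx₀notΩ : x₀ ∉ Ω := by
      intro hx₀
      -- integrability on balls
      have hI : ∀ r : ℝ, IntegrableOn (fun y => u y - u x₀) (Metric.ball x₀ r ∩ K) μ ∧
          IntegrableOn (fun y => φ y - φ x₀) (Metric.ball x₀ r ∩ K) μ := by
        intro r
        set s := Metric.ball x₀ r ∩ K with hsdef
        have hsm : MeasurableSet s := measurableSet_ball.inter hKm
        have hsub : s ⊆ K := Set.inter_subset_right
        have hμs : μ s < ⊤ := (measure_mono Set.inter_subset_left).trans_lt (hfin x₀ r)
        constructor
        · refine ⟨(hu_aesm s hsm hsub).sub aestronglyMeasurable_const,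
            HasFiniteIntegral.restrict_of_bounded (C := Cu + Cu) hμs ?_⟩
          refine ae_restrict_of_forall_mem hsm fun y hy => ?_
          calc ‖u y - u x₀‖ ≤ ‖u y‖ + ‖u x₀‖ := norm_sub_le _ _
            _ ≤ Cu + Cu := add_le_add (hCu' y (hsub hy)) (hCu' x₀ (hΩK hx₀))
        · refine ⟨(hφ_aesm s hsm hsub).sub aestronglyMeasurable_const,
            HasFiniteIntegral.restrict_of_bounded (C := C + C) hμs ?_⟩
          refine ae_restrict_of_forall_mem hsm fun y hy => ?_
          calc ‖φ y - φ x₀‖ ≤ ‖φ y‖ + ‖φ x₀‖ := norm_sub_le _ _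
            _ ≤ C + C := add_le_add (hCφ' y (hsub hy)) (hCφ' x₀ (hΩK hx₀))
      -- splitting of the average
      have hsplit : ∀ r : ℝ,
          (⨍ y in Metric.ball x₀ r ∩ K, (v y - v x₀) ∂μ) =
          (⨍ y in Metric.ball x₀ r ∩ K, (u y - u x₀) ∂μ) +
            ε * ⨍ y in Metric.ball x₀ r ∩ K, (φ y - φ x₀) ∂μ := by
        intro r
        have heq : ∀ y : X, v y - v x₀ = (u y - u x₀) + ε * (φ y - φ x₀) := by
          intro y; simp only [hvdef]; ring
        simp only [heq]
        rw [setAverage_eq, setAverage_eq, setAverage_eq,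
          integral_add (hI r).1 ((hI r).2.const_mul ε), integral_const_mul,
          smul_eq_mul, smul_eq_mul, smul_eq_mul]
        ring
      -- nonpositivity of averages at the max point
      have hF_nonpos : ∀ r : ℝ,
          (1 / r ^ 2) * ⨍ y in Metric.ball x₀ r ∩ K, (v y - v x₀) ∂μ ≤ 0 := by
        intro r
        have h1 : (0 : ℝ) ≤ 1 / r ^ 2 := by positivity
        have h2 : (⨍ y in Metric.ball x₀ r ∩ K, (v y - v x₀) ∂μ) ≤ 0 := by
          rw [setAverage_eq, smul_eq_mul]
          have hint : (∫ y in Metric.ball x₀ r ∩ K, (v y - v x₀) ∂μ) ≤ 0 := by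
            apply setIntegral_nonpos_of_ae_restrict
            refine ae_restrict_of_forall_mem (measurableSet_ball.inter hKm) fun y hy => ?_
            exact sub_nonpos.2 (hmax y hy.2)
          exact mul_nonpos_iff.2 (Or.inl ⟨by positivity, hint⟩)
        exact mul_nonpos_iff.2 (Or.inl ⟨h1, h2⟩)
      -- extract a positive lower bound from the liminf hypothesis
      have h0 := hφ x₀ hx₀
      rw [Filter.liminf_eq] at h0
      have hSne : {a : ℝ | ∀ᶠ r in 𝓝[>] (0:ℝ), a ≤
          (1 / r ^ 2) * ⨍ y in Metric.ball x₀ r ∩ closure Ω, (φ y - φ x₀) ∂μ}.Nonempty := by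
        by_contra hS
        rw [Set.not_nonempty_iff_eq_empty] at hS
        rw [hS, Real.sSup_empty] at h0
        exact lt_irrefl _ h0
      have hSbdd : BddAbove {a : ℝ | ∀ᶠ r in 𝓝[>] (0:ℝ), a ≤
          (1 / r ^ 2) * ⨍ y in Metric.ball x₀ r ∩ closure Ω, (φ y - φ x₀) ∂μ} := by
        by_contra hS
        rw [csSup_of_not_bddAbove hS, Real.sSup_empty] at h0
        exact lt_irrefl _ h0
      obtain ⟨c, hcS, hc⟩ := (lt_csSup_iff hSbdd hSne).1 h0
      have hcS' : ∀ᶠ r in 𝓝[>] (0:ℝ), c ≤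
          (1 / r ^ 2) * ⨍ y in Metric.ball x₀ r ∩ closure Ω, (φ y - φ x₀) ∂μ := hcS
      have hεc : 0 < ε * c := mul_pos hε hc
      -- from harmonicity
      have hG := Metric.tendsto_nhds.mp (hharm x₀ hx₀) (ε * c / 2) (by linarith)
      obtain ⟨r, ⟨⟨hcr, hGr⟩, hrpos⟩⟩ :=
        ((hcS'.and hG).and self_mem_nhdsWithin).exists
      rw [Real.dist_eq, sub_zero] at hGr
      have hGr' := (abs_lt.1 hGr).1
      have hHr : ε * c ≤ ε * ((1 / r ^ 2) *
          ⨍ y in Metric.ball x₀ r ∩ closure Ω, (φ y - φ x₀) ∂μ) :=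
        mul_le_mul_of_nonneg_left hcr hε.le
      have hFr := hF_nonpos r
      rw [hsplit r, mul_add] at hFr
      rw [← hKdef] at hHr
      linarith [hFr, hGr', hHr]
    have hx₀fr : x₀ ∈ frontier Ω := by
      rw [hΩo.frontier_eq]
      exact ⟨hx₀K, hx₀notΩ⟩
    intro y hy
    have h1 : v y ≤ v x₀ := hmax y hy
    have h2 : u x₀ ≤ sSup (u '' frontier Ω) :=
      le_csSup hAbdd (Set.mem_image_of_mem u hx₀fr)
    have h3 : |φ y| ≤ C := hCφ' y hy
    have h4 : |φ x₀| ≤ C := hCφ' x₀ hx₀K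
    have h5 := abs_le.1 h3
    have h6 := abs_le.1 h4
    have h7 : u y + ε * φ y ≤ u x₀ + ε * φ x₀ := h1
    nlinarith
  -- conclude
  apply le_antisymm
  · exact csSup_le_csSup hBbdd hAne (Set.image_mono (f := u) hfrK)
  · refine csSup_le (hKne.image u) ?_
    rintro b ⟨y, hy, rfl⟩
    refine le_of_forall_pos_le_add fun δ hδ => ?_
    have hε : (0 : ℝ) < δ / (2 * C) := by positivity
    have := key (δ / (2 * C)) hε y hy
    have h2C : (2 : ℝ) * C ≠ 0 := by positivity
    rw [div_mul_cancel₀ _ h2C] at this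
    exact this

/-- Weak maximum and minimum principle for AMV harmonic functions: on a proper
metric measure space, if `u` is continuous on `Ω̄`, locally integrable on `Ω`, with AMV
Laplacian existing and equal to `0` on `Ω`, and there is a bounded u.s.c. function `φ` with
lower AMV Laplacian `> 0` on `Ω`, then `max_{∂Ω} u = max_{Ω̄} u` and `min_{∂Ω} u = min_{Ω̄} u`. -/
theorem weak_max_min_principle_amv_harmonic
    {X : Type*} [MetricSpace X] [ProperSpace X] [MeasurableSpace X] [BorelSpace X]
    (μ : Measure X) [μ.IsOpenPosMeasure]
    (hfin : ∀ (x : X) (r : ℝ), μ (Metric.ball x r) < ⊤)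
    (Ω : Set X) (hΩo : IsOpen Ω) (hΩne : Ω.Nonempty) (hΩb : Bornology.IsBounded Ω)
    (hfr : (frontier Ω).Nonempty)
    (u : X → ℝ)
    (hcont : ContinuousOn u (closure Ω))
    (hloc : LocallyIntegrableOn u Ω μ)
    (hharm : ∀ x ∈ Ω, Filter.Tendsto
      (fun r : ℝ => (1 / r ^ 2) * ⨍ y in Metric.ball x r ∩ closure Ω, (u y - u x) ∂μ)
      (𝓝[>] (0 : ℝ)) (𝓝 0))
    (φ : X → ℝ)
    (hφb : Bornology.IsBounded (φ '' closure Ω))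
    (hφusc : UpperSemicontinuousOn φ (closure Ω))
    (hφ : ∀ x ∈ Ω, 0 < Filter.liminf
      (fun r : ℝ => (1 / r ^ 2) * ⨍ y in Metric.ball x r ∩ closure Ω, (φ y - φ x) ∂μ)
      (𝓝[>] (0 : ℝ))) :
    sSup (u '' frontier Ω) = sSup (u '' closure Ω) ∧
    sInf (u '' frontier Ω) = sInf (u '' closure Ω) := by
  constructor
  · exact amv_max_principle μ hfin Ω hΩo hΩne hΩb hfr u hcont hharm φ hφb hφusc hφ
  · have hharm' : ∀ x ∈ Ω, Filter.Tendsto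
        (fun r : ℝ => (1 / r ^ 2) * ⨍ y in Metric.ball x r ∩ closure Ω,
          ((fun z => -u z) y - (fun z => -u z) x) ∂μ)
        (𝓝[>] (0 : ℝ)) (𝓝 0) := by
      intro x hx
      have h0 := (hharm x hx).neg
      rw [neg_zero] at h0
      have heq : (fun r : ℝ => (1 / r ^ 2) * ⨍ y in Metric.ball x r ∩ closure Ω,
          ((fun z => -u z) y - (fun z => -u z) x) ∂μ) =
          fun r : ℝ => -((1 / r ^ 2) * ⨍ y in Metric.ball x r ∩ closure Ω, (u y - u x) ∂μ) := by
        funext r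
        simp only [show ∀ y : X, (fun z => -u z) y - (fun z => -u z) x = -(u y - u x) from
          fun y => by ring]
        rw [average_neg, mul_neg]
      rw [heq]
      exact h0
    have h := amv_max_principle μ hfin Ω hΩo hΩne hΩb hfr (fun z => -u z) hcont.neg hharm'
      φ hφb hφusc hφ
    have himg : ∀ S : Set X, (fun z => -u z) '' S = -(u '' S) := by
      intro S
      ext z
      simp only [Set.mem_image, Set.mem_neg]
      constructor
      · rintro ⟨y, hy, rfl⟩; exact ⟨y, hy, by ring⟩
      · rintro ⟨y, hy, hyz⟩; exact ⟨y, hy, by linarith⟩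
    rw [Real.sInf_def, Real.sInf_def, ← himg, ← himg, h]
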